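/- Let L be a Lie algebra over a commutative ring K, and let a, b ∈ L. For every r ∈ L and every natural numbers m, n there exists s ∈ L such that ⁅(ad a)^m r, (ad a)^{2n} b⁆ = ⁅(ad a)^{m+2n} r, b⁆ + ⁅s, a⁆. -/
import Mathlib

private lemma two_step_aux {L : Type*} [LieRing L] (a x y : L) :
    ∃ s : L, ⁅x, ⁅⁅y, a⁆, a⁆⁆ = ⁅⁅⁅x, a⁆, a⁆, y⁆ + ⁅s, a⁆ := by
  refine ⟨⁅x, ⁅y, a⁆⁆ - ⁅⁅x, a⁆, y⁆, ?_⟩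
  have e1 : ⁅x, ⁅⁅y, a⁆, a⁆⁆ = ⁅⁅x, ⁅y, a⁆⁆, a⁆ + ⁅⁅y, a⁆, ⁅x, a⁆⁆ :=
    leibniz_lie x ⁅y, a⁆ a
  have e2 : ⁅⁅x, a⁆, ⁅y, a⁆⁆ = ⁅⁅⁅x, a⁆, y⁆, a⁆ + ⁅y, ⁅⁅x, a⁆, a⁆⁆ :=
    leibniz_lie ⁅x, a⁆ y a
  have e3 : ⁅⁅y, a⁆, ⁅x, a⁆⁆ = -⁅⁅x, a⁆, ⁅y, a⁆⁆ := (lie_skew _ _).symm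
  have e4 : ⁅y, ⁅⁅x, a⁆, a⁆⁆ = -⁅⁅⁅x, a⁆, a⁆, y⁆ := (lie_skew _ _).symm
  rw [e1, e3, e2, e4, sub_lie]
  abel

theorem even_ad_rewrite {K L : Type*} [CommRing K] [LieRing L] [LieAlgebra K L]
    (a b : L) (r : L) (m n : ℕ) :
    ∃ s : L,
      ⁅(fun x : L => ⁅x, a⁆)^[m] r, (fun x : L => ⁅x, a⁆)^[2 * n] b⁆ =
        ⁅(fun x : L => ⁅x, a⁆)^[m + 2 * n] r, b⁆ + ⁅s, a⁆ := by
  induction n generalizing m with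
  | zero => exact ⟨0, by simp⟩
  | succ n ih =>
    set f : L → L := fun x : L => ⁅x, a⁆ with hf
    have h1 : f^[2 * (n + 1)] b = f^[2 * n] (f^[2] b) := by
      rw [← Function.iterate_add_apply]
      ring_nf
    obtain ⟨s1, hs1⟩ := ih (m := m + 2)
    have h2 : f^[m + 2] r = ⁅⁅f^[m] r, a⁆, a⁆ := by
      rw [Nat.add_comm, Function.iterate_add_apply]
      rfl
    obtain ⟨s2, hs2⟩ := two_step_aux a (f^[m] r) (f^[2 * n] b)
    have h3 : f^[2 * n] (f^[2] b) = ⁅⁅f^[2 * n] b, a⁆, a⁆ := by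
      rw [← Function.iterate_add_apply]
      rw [show 2 * n + 2 = 2 + 2 * n from by ring, Function.iterate_add_apply]
      rfl
    refine ⟨s2 + s1, ?_⟩
    rw [h1, h3, hs2, ← h2, hs1,
      show m + 2 + 2 * n = m + 2 * (n + 1) from by ring, add_lie]
    abel
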